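/- Unbalanced type α dynamics on the projective plane (Lemma 2.7, diagonal case): Let a_n = diag(1, β_n, γ_n) ∈ GL(3,ℝ) with 0 < γ_n ≤ β_n ≤ 1 for all n, β_n → 0 and γ_n/β_n → λ for some λ ∈ (0,1], acting on ℝP². Then: (1) for every p = [x:y:z] ∈ ℝP² with x ≠ 0, the dynamic set D_{(a_n)}(p) equals {[e₁]}; (2) for every p = [0:y:z] ∈ ℝP², D_{(a_n)}(p) equals the projective line through [e₁] and [0 : y : λz], i.e. the set {[s : t·y : t·λ·z] : (s,t) ∈ ℝ² \ {(0,0)}}. -/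

import Mathlib

open Matrix Filter Topology Set

noncomputable section

/-- `V3` is `ℝ³`. -/
abbrev V3 : Type := Fin 3 → ℝ

/-- The group `GL(3,ℝ)` of invertible `3 × 3` real matrices. -/
abbrev GL3 : Type := (Matrix (Fin 3) (Fin 3) ℝ)ˣ

/-- Nonzero vectors of `ℝ³` up to a nonzero scalar. -/
def projSetoid : Setoid {v : V3 // v ≠ 0} where
  r v w := ∃ c : ℝ, c ≠ 0 ∧ w.1 = c • v.1
  iseqv := by
    refine ⟨fun v => ⟨1, one_ne_zero, (one_smul ℝ v.1).symm⟩, ?_, ?_⟩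
    · rintro v w ⟨c, hc, h⟩
      exact ⟨c⁻¹, inv_ne_zero hc, by rw [h, smul_smul, inv_mul_cancel₀ hc, one_smul]⟩
    · rintro u v w ⟨c, hc, h⟩ ⟨d, hd, h'⟩
      exact ⟨d * c, mul_ne_zero hd hc, by rw [h', h, smul_smul]⟩

/-- The real projective plane `ℝP²`, as the quotient of `ℝ³ \ {0}` by nonzero scalings,
with the quotient topology.  (We use the same model for the dual projective plane `ℝP²*`,
a class `[f₁ : f₂ : f₃]*` of linear forms being recorded through its coefficient
vector `(f₁, f₂, f₃)`; the form acts on vectors by the dot product.) -/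
def RP2 : Type := Quotient projSetoid

/-- The projective class `[v]` of a nonzero vector. -/
def RP2.mk (v : V3) (hv : v ≠ 0) : RP2 := Quotient.mk projSetoid ⟨v, hv⟩

instance : TopologicalSpace RP2 :=
  inferInstanceAs (TopologicalSpace (Quotient projSetoid))

lemma RP2.ind {P : RP2 → Prop} (h : ∀ (v : V3) (hv : v ≠ 0), P (RP2.mk v hv)) (p : RP2) : P p := by
  refine Quotient.ind (fun a => ?_) p
  exact h a.1 a.2

lemma RP2.mk_eq_mk_iff {v w : V3} {hv : v ≠ 0} {hw : w ≠ 0} :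
    RP2.mk v hv = RP2.mk w hw ↔ ∃ c : ℝ, c ≠ 0 ∧ w = c • v :=
  ⟨fun h => Quotient.exact h, fun h => Quotient.sound h⟩

lemma ne_zero_of_coord {v : V3} (i : Fin 3) (h : v i ≠ 0) : v ≠ 0 :=
  fun h0 => h (by rw [h0]; rfl)

/-- The projective class of a vector, defaulting to `[e₁]` for the zero vector. -/
def RP2.mk' (v : V3) : RP2 :=
  if h : v = 0 then RP2.mk ![1, 0, 0] (ne_zero_of_coord 0 (by simp)) else RP2.mk v h

lemma e1_ne : (![1, 0, 0] : V3) ≠ 0 := ne_zero_of_coord 0 (by norm_num)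

lemma e3_ne : (![0, 0, 1] : V3) ≠ 0 := ne_zero_of_coord 2 (by simp)

lemma GL3.mulVec_ne {g : GL3} {v : V3} (hv : v ≠ 0) :
    (g : Matrix (Fin 3) (Fin 3) ℝ) *ᵥ v ≠ 0 := by
  intro h
  apply hv
  have h2 : ((g⁻¹ : GL3) : Matrix (Fin 3) (Fin 3) ℝ) *ᵥ
      ((g : Matrix (Fin 3) (Fin 3) ℝ) *ᵥ v) = 0 := by rw [h, Matrix.mulVec_zero]
  rwa [Matrix.mulVec_mulVec, Units.inv_mul, Matrix.one_mulVec] at h2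

/-- The action of `g ∈ GL(3,ℝ)` on `ℝP²`, `g · [v] = [g v]`. -/
def RP2.mapMat (g : GL3) : RP2 → RP2 :=
  Quotient.lift
    (fun a : {v : V3 // v ≠ 0} =>
      RP2.mk ((g : Matrix (Fin 3) (Fin 3) ℝ) *ᵥ a.1) (GL3.mulVec_ne a.2))
    (by
      rintro a b ⟨c, hc, h⟩
      apply Quotient.sound
      refine ⟨c, hc, ?_⟩
      show (g : Matrix (Fin 3) (Fin 3) ℝ) *ᵥ b.1 = c • ((g : Matrix (Fin 3) (Fin 3) ℝ) *ᵥ a.1)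
      rw [h, Matrix.mulVec_smul])

lemma RP2.mapMat_mk (g : GL3) (v : V3) (hv : v ≠ 0) :
    RP2.mapMat g (RP2.mk v hv) =
      RP2.mk ((g : Matrix (Fin 3) (Fin 3) ℝ) *ᵥ v) (GL3.mulVec_ne hv) := rfl

/-- The element of `GL(3,ℝ)` acting on coefficient vectors of linear forms the way `g`
acts on `ℝP²*`:  the coefficient vector of `f ∘ g⁻¹` is `(g⁻¹)ᵀ` applied to that of `f`. -/
def dualGL (g : GL3) : GL3 where
  val := ((g⁻¹ : GL3) : Matrix (Fin 3) (Fin 3) ℝ)ᵀ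
  inv := ((g : GL3) : Matrix (Fin 3) (Fin 3) ℝ)ᵀ
  val_inv := by rw [← Matrix.transpose_mul, Units.mul_inv, Matrix.transpose_one]
  inv_val := by rw [← Matrix.transpose_mul, Units.inv_mul, Matrix.transpose_one]

/-- The flag space `X`: pairs `([v], [f]) ∈ ℝP² × ℝP²*` with `f(v) = 0`. -/
def FlagSpace : Set (RP2 × RP2) :=
  {x | ∀ (v f : V3) (hv : v ≠ 0) (hf : f ≠ 0),
    x.1 = RP2.mk v hv → x.2 = RP2.mk f hf → f ⬝ᵥ v = 0}

/-- Points of the flag space. -/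
abbrev Flag3 : Type := ↥FlagSpace

lemma mem_flagSpace_mk {v f : V3} (hv : v ≠ 0) (hf : f ≠ 0) (h : f ⬝ᵥ v = 0) :
    (RP2.mk v hv, RP2.mk f hf) ∈ FlagSpace := by
  rintro v' f' hv' hf' hp hq
  obtain ⟨c, hc, hcv⟩ := RP2.mk_eq_mk_iff.1 hp
  obtain ⟨d, hd, hdf⟩ := RP2.mk_eq_mk_iff.1 hq
  rw [hcv, hdf, smul_dotProduct, dotProduct_smul, h]
  simp

lemma dot_invariance (g : GL3) (v f : V3) :
    (((dualGL g : GL3) : Matrix (Fin 3) (Fin 3) ℝ) *ᵥ f) ⬝ᵥ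
      ((g : Matrix (Fin 3) (Fin 3) ℝ) *ᵥ v) = f ⬝ᵥ v := by
  have h1 : ((dualGL g : GL3) : Matrix (Fin 3) (Fin 3) ℝ) *ᵥ f =
      f ᵥ* ((g⁻¹ : GL3) : Matrix (Fin 3) (Fin 3) ℝ) := Matrix.mulVec_transpose _ _
  rw [h1, Matrix.dotProduct_mulVec, Matrix.vecMul_vecMul, Units.inv_mul, Matrix.vecMul_one]

lemma flagPair_mem (g : GL3) {x : RP2 × RP2} (hx : x ∈ FlagSpace) :
    (RP2.mapMat g x.1, RP2.mapMat (dualGL g) x.2) ∈ FlagSpace := by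
  obtain ⟨p, q⟩ := x
  revert hx
  refine Quotient.inductionOn₂ p q ?_
  rintro ⟨v, hv⟩ ⟨f, hf⟩ hx
  have h0 : f ⬝ᵥ v = 0 := hx v f hv hf rfl rfl
  exact mem_flagSpace_mk _ _ (by rw [dot_invariance]; exact h0)

/-- The action of `g ∈ GL(3,ℝ)` on the flag space,
`g · ([v], [f]) = ([g v], [f ∘ g⁻¹])`. -/
def flagMap (g : GL3) (x : Flag3) : Flag3 :=
  ⟨(RP2.mapMat g x.1.1, RP2.mapMat (dualGL g) x.1.2), flagPair_mem g x.2⟩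

/-! ### Composition laws and continuity -/

lemma RP2.mapMat_mapMat (g h : GL3) (p : RP2) :
    RP2.mapMat g (RP2.mapMat h p) = RP2.mapMat (g * h) p := by
  refine Quotient.inductionOn p fun a => ?_
  apply Quotient.sound
  exact ⟨1, one_ne_zero, by simp [Matrix.mulVec_mulVec, Units.val_mul]⟩

lemma RP2.mapMat_one (p : RP2) : RP2.mapMat 1 p = p := by
  refine Quotient.inductionOn p fun a => ?_
  apply Quotient.sound
  exact ⟨1, one_ne_zero, by simp [Matrix.one_mulVec, Units.val_one]⟩

lemma dualGL_mul (g h : GL3) : dualGL (g * h) = dualGL g * dualGL h := by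
  apply Units.ext
  rw [Units.val_mul]
  show (((g * h)⁻¹ : GL3) : Matrix (Fin 3) (Fin 3) ℝ)ᵀ =
    ((g⁻¹ : GL3) : Matrix (Fin 3) (Fin 3) ℝ)ᵀ * ((h⁻¹ : GL3) : Matrix (Fin 3) (Fin 3) ℝ)ᵀ
  rw [_root_.mul_inv_rev, Units.val_mul, Matrix.transpose_mul]

lemma dualGL_one : dualGL (1 : GL3) = 1 := by
  apply Units.ext
  show (((1 : GL3)⁻¹ : GL3) : Matrix (Fin 3) (Fin 3) ℝ)ᵀ = ((1 : GL3) : Matrix (Fin 3) (Fin 3) ℝ)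
  rw [inv_one, Units.val_one, Matrix.transpose_one]

lemma flagMap_flagMap (g h : GL3) (x : Flag3) :
    flagMap g (flagMap h x) = flagMap (g * h) x := by
  apply Subtype.ext
  apply Prod.ext
  · exact RP2.mapMat_mapMat g h x.1.1
  · show RP2.mapMat (dualGL g) (RP2.mapMat (dualGL h) x.1.2) = RP2.mapMat (dualGL (g * h)) x.1.2
    rw [RP2.mapMat_mapMat, dualGL_mul]

lemma flagMap_one (x : Flag3) : flagMap 1 x = x := by
  apply Subtype.ext
  apply Prod.ext
  · exact RP2.mapMat_one x.1.1
  · show RP2.mapMat (dualGL 1) x.1.2 = x.1.2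
    rw [dualGL_one, RP2.mapMat_one]

lemma continuous_mulVec (M : Matrix (Fin 3) (Fin 3) ℝ) :
    Continuous fun v : V3 => M *ᵥ v := by
  have h : (fun v : V3 => M *ᵥ v) = fun v => fun i => ∑ j, M i j * v j := by
    funext v i
    simp [Matrix.mulVec, dotProduct]
  rw [h]
  exact continuous_pi fun i =>
    continuous_finsetSum _ fun j _ => continuous_const.mul (continuous_apply j)

lemma continuous_mapMat (g : GL3) : Continuous (RP2.mapMat g) := by
  apply Continuous.quotient_lift
  exact continuous_quotient_mk'.comp
    (Continuous.subtype_mk ((continuous_mulVec _).comp continuous_subtype_val) _)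

lemma continuous_flagMap (g : GL3) : Continuous (flagMap g) := by
  apply Continuous.subtype_mk
  exact ((continuous_mapMat g).comp (continuous_fst.comp continuous_subtype_val)).prodMk
    ((continuous_mapMat (dualGL g)).comp (continuous_snd.comp continuous_subtype_val))

/-- The action of `g ∈ GL(3,ℝ)` on the flag space, as a homeomorphism. -/
def flagHomeo (g : GL3) : Flag3 ≃ₜ Flag3 where
  toFun := flagMap g
  invFun := flagMap g⁻¹
  left_inv := fun x => by rw [flagMap_flagMap, inv_mul_cancel, flagMap_one]
  right_inv := fun x => by rw [flagMap_flagMap, mul_inv_cancel, flagMap_one]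
  continuous_toFun := continuous_flagMap g
  continuous_invFun := continuous_flagMap g⁻¹

/-- The group of homeomorphisms of a topological space
(with `(f * g) x = f (g x)`). -/
instance homeoGroup (Z : Type*) [TopologicalSpace Z] : Group (Z ≃ₜ Z) where
  mul f g := g.trans f
  one := Homeomorph.refl Z
  inv := Homeomorph.symm
  mul_assoc _ _ _ := Homeomorph.ext fun _ => rfl
  one_mul _ := Homeomorph.ext fun _ => rfl
  mul_one _ := Homeomorph.ext fun _ => rfl
  inv_mul_cancel f := Homeomorph.ext fun x => f.symm_apply_apply x

/-! ### Geometric objects in the flag space -/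

/-- The α-circle of a point `p ∈ ℝP²`: all flags whose point is `p`. -/
def Cα (p : RP2) : Set Flag3 := {x | x.1.1 = p}

/-- The β-circle of the projective line with defining form (class) `q`:
all flags whose plane is `ker q`. -/
def Cβ (q : RP2) : Set Flag3 := {x | x.1.2 = q}

/-- The plane of the flag `x` contains the direction of the vector `u`. -/
def planeContains (x : Flag3) (u : V3) : Prop :=
  ∀ (f : V3) (hf : f ≠ 0), x.1.2 = RP2.mk f hf → f ⬝ᵥ u = 0

/-- The point of the flag `x` lies on the projective line defined by the linear
form of coefficients `w`. -/
def pointOnForm (x : Flag3) (w : V3) : Prop :=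
  ∀ (v : V3) (hv : v ≠ 0), x.1.1 = RP2.mk v hv → w ⬝ᵥ v = 0

/-- The β-circle of the projective line spanned by the (independent) directions of
`u` and `w`: all flags whose plane contains both. -/
def CβSpan (u w : V3) : Set Flag3 := {x | planeContains x u ∧ planeContains x w}

lemma li_ne_zero_0 {v1 v2 v3 : V3} (h : LinearIndependent ℝ ![v1, v2, v3]) : v1 ≠ 0 := by
  have := h.ne_zero 0; simpa using this

lemma li_ne_zero_1 {v1 v2 v3 : V3} (h : LinearIndependent ℝ ![v1, v2, v3]) : v2 ≠ 0 := by
  have := h.ne_zero 1; simpa using this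

lemma li_ne_zero_2 {v1 v2 v3 : V3} (h : LinearIndependent ℝ ![v1, v2, v3]) : v3 ≠ 0 := by
  have := h.ne_zero 2; simpa using this

/-- The repulsive bouquet of circles `B⁻(g) = C_α([v₃]) ∪ C_β(span(v₂,v₃))` of a
loxodromic element with eigenvectors `v₁, v₂, v₃` (eigenvalues in decreasing order
of modulus). -/
def bouquetMinus (v2 v3 : V3) (h3 : v3 ≠ 0) : Set Flag3 :=
  Cα (RP2.mk v3 h3) ∪ CβSpan v2 v3

/-- The attractive bouquet of circles `B⁺(g) = C_α([v₁]) ∪ C_β(span(v₁,v₂))`. -/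
def bouquetPlus (v1 v2 : V3) (h1 : v1 ≠ 0) : Set Flag3 :=
  Cα (RP2.mk v1 h1) ∪ CβSpan v1 v2

/-- The dynamic set of a point `x` under a sequence of maps `g n`: all limits of
`g (n k) (x k)` for a strictly increasing sequence `(n k)` and a sequence `x k → x`. -/
def DynSet {M : Type*} [TopologicalSpace M] (g : ℕ → M → M) (x : M) : Set M :=
  {y | ∃ φ : ℕ → ℕ, StrictMono φ ∧ ∃ u : ℕ → M,
    Tendsto u atTop (𝓝 x) ∧ Tendsto (fun k => g (φ k) (u k)) atTop (𝓝 y)}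

end

noncomputable section

namespace RP2aux

def nsq (v : V3) : ℝ := v 0 ^ 2 + v 1 ^ 2 + v 2 ^ 2

lemma exists_ne {v : V3} (hv : v ≠ 0) : ∃ i, v i ≠ 0 := by
  by_contra h; push_neg at h; exact hv (funext fun i => h i)

lemma nsq_nonneg (v : V3) : 0 ≤ nsq v := by unfold nsq; positivity

lemma nsq_pos {v : V3} (hv : v ≠ 0) : 0 < nsq v := by
  obtain ⟨i, hi⟩ := exists_ne hv
  unfold nsq
  fin_cases i <;> simp only [Fin.isValue] at hi <;> positivity

def Fmat (v : V3) : Fin 3 → Fin 3 → ℝ := fun i j => v i * v j / nsq v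

lemma Fmat_smul (c : ℝ) (hc : c ≠ 0) (v : V3) : Fmat (c • v) = Fmat v := by
  funext i j
  unfold Fmat nsq
  simp only [Pi.smul_apply, smul_eq_mul]
  rw [show (c*v 0)^2 + (c*v 1)^2 + (c*v 2)^2 = c^2 * (v 0^2+v 1^2+v 2^2) by ring,
      show c * v i * (c * v j) = c^2 * (v i * v j) by ring,
      mul_div_mul_left _ _ (pow_ne_zero 2 hc)]

def F : RP2 → Fin 3 → Fin 3 → ℝ :=
  Quotient.lift (fun a : {v : V3 // v ≠ 0} => Fmat a.1) (by
    rintro a b ⟨c, hc, h⟩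
    rw [h, Fmat_smul c hc])

lemma F_mk (v : V3) (hv : v ≠ 0) : F (RP2.mk v hv) = Fmat v := rfl

lemma continuous_F : Continuous F := by
  apply Continuous.quotient_lift
  apply continuous_pi; intro i; apply continuous_pi; intro j
  have hnum : Continuous fun a : {v : V3 // v ≠ 0} => a.1 i * a.1 j :=
    ((continuous_apply i).comp continuous_subtype_val).mul
      ((continuous_apply j).comp continuous_subtype_val)
  have hden : Continuous fun a : {v : V3 // v ≠ 0} => nsq a.1 := by
    exact ((((continuous_apply (0:Fin 3)).comp continuous_subtype_val).pow 2).add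
      (((continuous_apply (1:Fin 3)).comp continuous_subtype_val).pow 2)).add
      (((continuous_apply (2:Fin 3)).comp continuous_subtype_val).pow 2)
  exact hnum.div hden (fun a => (nsq_pos a.2).ne')

lemma tendsto_mk {w : ℕ → V3} {z : V3} (hw : ∀ n, w n ≠ 0) (hz : z ≠ 0)
    (h : Tendsto w atTop (𝓝 z)) :
    Tendsto (fun n => RP2.mk (w n) (hw n)) atTop (𝓝 (RP2.mk z hz)) := by
  have h1 : Tendsto (fun n => (⟨w n, hw n⟩ : {v : V3 // v ≠ 0})) atTop
      (𝓝 (⟨z, hz⟩ : {v : V3 // v ≠ 0})) := tendsto_subtype_rng.2 h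
  exact (continuous_quotient_mk'.tendsto _).comp h1

lemma scaled_ne {B C : ℝ} (hB : B ≠ 0) (hC : C ≠ 0) {r : V3} (hr : r ≠ 0) :
    (fun i => (![1,B,C] : V3) i * r i) ≠ 0 := by
  obtain ⟨i, hi⟩ := exists_ne hr
  apply ne_zero_of_coord i
  fin_cases i <;> simp only [Fin.isValue] at hi ⊢ <;>
    [simpa using hi; exact mul_ne_zero hB hi; exact mul_ne_zero hC hi]

lemma Fmat_scale {B C : ℝ} (hB : B ≠ 0) (hC : C ≠ 0) {r : V3} (hr : r ≠ 0) (i j : Fin 3) :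
    Fmat (fun i => (![1,B,C] : V3) i * r i) i j =
      (![1,B,C] : V3) i * (![1,B,C] : V3) j * Fmat r i j /
        (Fmat r 0 0 + B^2 * Fmat r 1 1 + C^2 * Fmat r 2 2) := by
  have hS : (0:ℝ) < nsq r := nsq_pos hr
  have hD : (0:ℝ) < nsq (fun i => (![1,B,C] : V3) i * r i) := nsq_pos (scaled_ne hB hC hr)
  have hden : Fmat r 0 0 + B^2 * Fmat r 1 1 + C^2 * Fmat r 2 2 =
      nsq (fun i => (![1,B,C] : V3) i * r i) / nsq r := by
    unfold Fmat nsq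
    simp only [Matrix.cons_val_zero, Matrix.cons_val_one, Matrix.head_cons,
      Matrix.cons_val_two, Matrix.tail_cons]
    field_simp
  rw [hden]
  unfold Fmat
  simp only []
  rw [div_div_eq_mul_div]
  apply (div_eq_div_iff hD.ne' hD.ne').2
  rw [mul_assoc (![1,B,C] i * ![1,B,C] j) (r i * r j / nsq r) (nsq r), div_mul_cancel₀ _ hS.ne']
  ring

lemma sq_div_bound {B a u d : ℝ} (hB : 0 < B) (hd : 0 ≤ d) (h0 : d = 0 → u = 0) :
    (B*u)^2 / (a^2 + B^2*d) ≤ u^2/d := by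
  rcases hd.eq_or_lt with h | h
  · rw [h0 h.symm]; simp
  · have h1 : (B*u)^2/(a^2+B^2*d) ≤ (B*u)^2/(B^2*d) := by
      gcongr
      nlinarith [sq_nonneg a]
    have h2 : (B*u)^2/(B^2*d) = u^2/d := by
      rw [mul_pow, mul_div_mul_left _ _ (by positivity : B^2 ≠ 0)]
    linarith

lemma extract (β γ : ℕ → ℝ) (A : ℕ → GL3)
    (hA : ∀ n, (A n : Matrix (Fin 3) (Fin 3) ℝ) = Matrix.diagonal ![1, β n, γ n])
    (φ : ℕ → ℕ) (u : ℕ → RP2) (v : V3) (hv : v ≠ 0) (y : RP2)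
    (hu : Tendsto u atTop (𝓝 (RP2.mk v hv)))
    (hy : Tendsto (fun k => RP2.mapMat (A (φ k)) (u k)) atTop (𝓝 y)) :
    ∃ (r : ℕ → V3) (_ : ∀ k, r k ≠ 0),
      Tendsto (fun k => Fmat (r k)) atTop (𝓝 (Fmat v)) ∧
      Tendsto (fun k => Fmat (fun i => (![1, β (φ k), γ (φ k)] : V3) i * r k i))
        atTop (𝓝 (F y)) := by
  refine ⟨fun k => ((u k).out).1, fun k => ((u k).out).2, ?_, ?_⟩
  · have h1 : Tendsto (fun k => F (u k)) atTop (𝓝 (F (RP2.mk v hv))) :=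
      (continuous_F.tendsto _).comp hu
    refine h1.congr fun k => ?_
    conv_lhs => rw [← (u k).out_eq]
    rfl
  · have h1 : Tendsto (fun k => F (RP2.mapMat (A (φ k)) (u k))) atTop (𝓝 (F y)) :=
      (continuous_F.tendsto _).comp hy
    refine h1.congr fun k => ?_
    have hvec : (A (φ k) : Matrix (Fin 3) (Fin 3) ℝ) *ᵥ ((u k).out).1
        = fun i => (![1, β (φ k), γ (φ k)] : V3) i * ((u k).out).1 i := by
      funext i; rw [hA, Matrix.mulVec_diagonal]
    conv_lhs => rw [← (u k).out_eq]
    show Fmat ((A (φ k) : Matrix (Fin 3) (Fin 3) ℝ) *ᵥ ((u k).out).1) = _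
    rw [hvec]

lemma eq_e1_of_F (y : RP2) (hFy : F y = Fmat ![1,0,0]) : y = RP2.mk ![1,0,0] e1_ne := by
  induction y using RP2.ind with
  | h w hw =>
  rw [F_mk] at hFy
  have hS : (0:ℝ) < nsq w := nsq_pos hw
  have hFe : ∀ i j : Fin 3, Fmat (![1,0,0]:V3) i j = (![1,0,0]:V3) i * (![1,0,0]:V3) j := by
    intro i j; unfold Fmat nsq; norm_num [Matrix.cons_val_two, Matrix.tail_cons, Matrix.head_cons]
  have hw1 : w 1 = 0 := by
    have h11 := congrFun (congrFun hFy 1) 1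
    rw [hFe] at h11
    simp only [Matrix.cons_val_one, Matrix.head_cons, Matrix.cons_val_zero, mul_zero, zero_mul] at h11
    unfold Fmat at h11
    rcases div_eq_zero_iff.1 h11 with h | h
    · exact mul_self_eq_zero.1 h
    · exact absurd h hS.ne'
  have hw2 : w 2 = 0 := by
    have h22 := congrFun (congrFun hFy 2) 2
    rw [hFe] at h22
    simp only [Matrix.cons_val_two, Matrix.tail_cons, Matrix.head_cons, mul_zero, zero_mul] at h22
    unfold Fmat at h22
    rcases div_eq_zero_iff.1 h22 with h | h
    · exact mul_self_eq_zero.1 h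
    · exact absurd h hS.ne'
  have hw0 : w 0 ≠ 0 := by
    obtain ⟨i, hi⟩ := exists_ne hw
    fin_cases i
    · exact hi
    · exact absurd hw1 hi
    · exact absurd hw2 hi
  exact RP2.mk_eq_mk_iff.2 ⟨(w 0)⁻¹, inv_ne_zero hw0,
    by funext i; fin_cases i <;> simp [hw1, hw2, inv_mul_cancel₀ hw0]⟩

lemma on_line_of_rel (l : ℝ) (hl0 : 0 < l) (v : V3) (hv : v ≠ 0) (hv0 : v 0 = 0)
    (y : RP2)
    (hrel : l^2*(v 2)^2 * F y 1 1 - 2*l*(v 1)*(v 2) * F y 1 2 + (v 1)^2 * F y 2 2 = 0) :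
    ∃ (s t : ℝ) (h : (![s, t * v 1, t * (l * v 2)] : V3) ≠ 0),
      y = RP2.mk ![s, t * v 1, t * (l * v 2)] h := by
  induction y using RP2.ind with
  | h w hw =>
  rw [F_mk] at hrel
  have hS : (0:ℝ) < nsq w := nsq_pos hw
  have hkey : l * v 2 * w 1 - v 1 * w 2 = 0 := by
    have h2 : (l * v 2 * w 1 - v 1 * w 2)^2 / nsq w = 0 := by
      rw [← hrel]; unfold Fmat; field_simp; ring
    rcases div_eq_zero_iff.1 h2 with h | h
    · exact pow_eq_zero_iff two_ne_zero |>.1 h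
    · exact absurd h hS.ne'
  obtain ⟨t, hw1', hw2'⟩ : ∃ t : ℝ, w 1 = t * v 1 ∧ w 2 = t * (l * v 2) := by
    by_cases hv1 : v 1 = 0
    · have hv2 : v 2 ≠ 0 := by
        obtain ⟨i, hi⟩ := exists_ne hv
        fin_cases i
        · exact absurd hv0 hi
        · exact absurd hv1 hi
        · exact hi
      have hw1 : w 1 = 0 := by
        rw [hv1] at hkey
        simp only [zero_mul, sub_zero] at hkey
        rcases mul_eq_zero.1 hkey with h | h
        · exact absurd h (mul_ne_zero hl0.ne' hv2)
        · exact h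
      refine ⟨w 2 / (l * v 2), ?_, ?_⟩
      · rw [hv1, hw1]; ring
      · field_simp
    · refine ⟨w 1 / v 1, by field_simp, ?_⟩
      field_simp
      linear_combination -hkey
  have hzw : (![w 0, t * v 1, t * (l * v 2)] : V3) = w := by
    funext i; fin_cases i
    · rfl
    · exact hw1'.symm
    · exact hw2'.symm
  have hz : (![w 0, t * v 1, t * (l * v 2)] : V3) ≠ 0 := by rw [hzw]; exact hw
  refine ⟨w 0, t, hz, ?_⟩
  exact RP2.mk_eq_mk_iff.2 ⟨1, one_ne_zero, by rw [one_smul, hzw]⟩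

set_option maxHeartbeats 1000000 in
lemma part1_sub (β γ : ℕ → ℝ) (hpos : ∀ n, 0 < γ n ∧ γ n ≤ β n ∧ β n ≤ 1)
    (hβ : Tendsto β atTop (𝓝 0))
    (A : ℕ → GL3)
    (hA : ∀ n, (A n : Matrix (Fin 3) (Fin 3) ℝ) = Matrix.diagonal ![1, β n, γ n])
    (v : V3) (hv : v ≠ 0) (hv0 : v 0 ≠ 0) (y : RP2)
    (hy : y ∈ DynSet (fun n => RP2.mapMat (A n)) (RP2.mk v hv)) :
    y = RP2.mk ![1,0,0] e1_ne := by
  obtain ⟨φ, hφ, u, hu, hyt⟩ := hy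
  obtain ⟨r, hr, hP, hG⟩ := extract β γ A hA φ u v hv y hu hyt
  have hβpos : ∀ n, 0 < β n := fun n => lt_of_lt_of_le (hpos n).1 (hpos n).2.1
  have hγpos : ∀ n, 0 < γ n := fun n => (hpos n).1
  have hγ : Tendsto γ atTop (𝓝 0) :=
    squeeze_zero (fun n => (hγpos n).le) (fun n => (hpos n).2.1) hβ
  have hBφ : Tendsto (fun k => β (φ k)) atTop (𝓝 0) := hβ.comp hφ.tendsto_atTop
  have hCφ : Tendsto (fun k => γ (φ k)) atTop (𝓝 0) := hγ.comp hφ.tendsto_atTop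
  have hPij : ∀ i j, Tendsto (fun k => Fmat (r k) i j) atTop (𝓝 (Fmat v i j)) :=
    fun i j => tendsto_pi_nhds.1 (tendsto_pi_nhds.1 hP i) j
  have hSv : (0:ℝ) < nsq v := nsq_pos hv
  have hp : Fmat v 0 0 ≠ 0 := by
    unfold Fmat
    exact div_ne_zero (mul_ne_zero hv0 hv0) hSv.ne'
  have hΔ : Tendsto (fun k => Fmat (r k) 0 0 + (β (φ k))^2 * Fmat (r k) 1 1
      + (γ (φ k))^2 * Fmat (r k) 2 2) atTop (𝓝 (Fmat v 0 0)) := by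
    have h := ((hPij 0 0).add ((hBφ.pow 2).mul (hPij 1 1))).add ((hCφ.pow 2).mul (hPij 2 2))
    simpa using h
  have hm : ∀ i : Fin 3, Tendsto (fun k => (![1, β (φ k), γ (φ k)] : V3) i) atTop
      (𝓝 ((![1,0,0] : V3) i)) := by
    intro i
    fin_cases i
    · simpa using (tendsto_const_nhds : Tendsto (fun _ : ℕ => (1:ℝ)) atTop _)
    · simpa using hBφ
    · simpa using hCφ
  have hGlim : Tendsto (fun k => Fmat (fun i => (![1, β (φ k), γ (φ k)] : V3) i * r k i))
      atTop (𝓝 (Fmat ![1,0,0])) := by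
    rw [tendsto_pi_nhds]; intro i; rw [tendsto_pi_nhds]; intro j
    have h2 : Tendsto (fun k => (![1, β (φ k), γ (φ k)] : V3) i
        * (![1, β (φ k), γ (φ k)] : V3) j
        * Fmat (r k) i j / (Fmat (r k) 0 0 + (β (φ k))^2 * Fmat (r k) 1 1
          + (γ (φ k))^2 * Fmat (r k) 2 2)) atTop
        (𝓝 ((![1,0,0]:V3) i * (![1,0,0]:V3) j * Fmat v i j / Fmat v 0 0)) :=
      (((hm i).mul (hm j)).mul (hPij i j)).div hΔ hp
    have h3 : (![1,0,0]:V3) i * (![1,0,0]:V3) j * Fmat v i j / Fmat v 0 0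
        = Fmat ![1,0,0] i j := by
      have hone : nsq (![1,0,0] : V3) = 1 := by unfold nsq; norm_num [Matrix.cons_val_two, Matrix.tail_cons, Matrix.head_cons]
      unfold Fmat
      rw [hone]
      fin_cases i <;> fin_cases j <;>
        simp_all [Fmat, div_self]
    rw [← h3]
    refine h2.congr fun k => ?_
    exact (Fmat_scale (hβpos (φ k)).ne' (hγpos (φ k)).ne' (hr k) i j).symm
  exact eq_e1_of_F y (tendsto_nhds_unique hG hGlim)

set_option maxHeartbeats 1000000 in
lemma part2_sub (β γ : ℕ → ℝ) (hpos : ∀ n, 0 < γ n ∧ γ n ≤ β n ∧ β n ≤ 1)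
    (hβ : Tendsto β atTop (𝓝 0)) (l : ℝ) (hl0 : 0 < l)
    (hratio : Tendsto (fun n => γ n / β n) atTop (𝓝 l))
    (A : ℕ → GL3)
    (hA : ∀ n, (A n : Matrix (Fin 3) (Fin 3) ℝ) = Matrix.diagonal ![1, β n, γ n])
    (v : V3) (hv : v ≠ 0) (hv0 : v 0 = 0) (y : RP2)
    (hy : y ∈ DynSet (fun n => RP2.mapMat (A n)) (RP2.mk v hv)) :
    ∃ (s t : ℝ) (h : (![s, t * v 1, t * (l * v 2)] : V3) ≠ 0),
      y = RP2.mk ![s, t * v 1, t * (l * v 2)] h := by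
  obtain ⟨φ, hφ, u, hu, hyt⟩ := hy
  obtain ⟨r, hr, hP, hG⟩ := extract β γ A hA φ u v hv y hu hyt
  have hβpos : ∀ n, 0 < β n := fun n => lt_of_lt_of_le (hpos n).1 (hpos n).2.1
  have hγpos : ∀ n, 0 < γ n := fun n => (hpos n).1
  have hRφ : Tendsto (fun k => γ (φ k) / β (φ k)) atTop (𝓝 l) :=
    hratio.comp hφ.tendsto_atTop
  have hPij : ∀ i j, Tendsto (fun k => Fmat (r k) i j) atTop (𝓝 (Fmat v i j)) :=
    fun i j => tendsto_pi_nhds.1 (tendsto_pi_nhds.1 hP i) j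
  have hGij : ∀ i j, Tendsto
      (fun k => Fmat (fun i => (![1, β (φ k), γ (φ k)] : V3) i * r k i) i j)
      atTop (𝓝 (F y i j)) :=
    fun i j => tendsto_pi_nhds.1 (tendsto_pi_nhds.1 hG i) j
  have hSv : (0:ℝ) < nsq v := nsq_pos hv
  -- the scale-invariant upper bound sequence tends to 0
  have hN0 : Tendsto (fun k => l^2*(v 2)^2 * Fmat (r k) 1 1
      - 2*l*(v 1)*(v 2) * ((γ (φ k) / β (φ k)) * Fmat (r k) 1 2)
      + (v 1)^2 * ((γ (φ k) / β (φ k))^2 * Fmat (r k) 2 2)) atTop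
      (𝓝 (l^2*(v 2)^2 * Fmat v 1 1 - 2*l*(v 1)*(v 2) * (l * Fmat v 1 2)
        + (v 1)^2 * (l^2 * Fmat v 2 2))) :=
    (((hPij 1 1).const_mul _).sub ((hRφ.mul (hPij 1 2)).const_mul _)).add
      (((hRφ.pow 2).mul (hPij 2 2)).const_mul _)
  have hNzero : l^2*(v 2)^2 * Fmat v 1 1 - 2*l*(v 1)*(v 2) * (l * Fmat v 1 2)
      + (v 1)^2 * (l^2 * Fmat v 2 2) = 0 := by
    unfold Fmat
    field_simp
    ring
  rw [hNzero] at hN0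
  have hM : Tendsto (fun k => Fmat (r k) 1 1 + (γ (φ k) / β (φ k))^2 * Fmat (r k) 2 2)
      atTop (𝓝 (Fmat v 1 1 + l^2 * Fmat v 2 2)) :=
    (hPij 1 1).add ((hRφ.pow 2).mul (hPij 2 2))
  have hμ : (0:ℝ) < Fmat v 1 1 + l^2 * Fmat v 2 2 := by
    have hμeq : Fmat v 1 1 + l^2 * Fmat v 2 2 = ((v 1)^2 + l^2 * (v 2)^2) / nsq v := by
      unfold Fmat; field_simp
    rw [hμeq]
    apply div_pos _ hSv
    obtain ⟨i, hi⟩ := exists_ne hv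
    fin_cases i
    · exact absurd hv0 hi
    · positivity
    · positivity
  -- identities rewriting Fmat combinations as explicit quotients
  have hq1 : ∀ k, l^2*(v 2)^2 * Fmat (r k) 1 1
      - 2*l*(v 1)*(v 2) * ((γ (φ k) / β (φ k)) * Fmat (r k) 1 2)
      + (v 1)^2 * ((γ (φ k) / β (φ k))^2 * Fmat (r k) 2 2)
      = (l*(v 2)*(r k 1) - (v 1)*(γ (φ k) / β (φ k))*(r k 2))^2 / nsq (r k) := by
    intro k
    unfold Fmat
    field_simp
    ring
  have hq2 : ∀ k, Fmat (r k) 1 1 + (γ (φ k) / β (φ k))^2 * Fmat (r k) 2 2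
      = ((r k 1)^2 + (γ (φ k) / β (φ k))^2 * (r k 2)^2) / nsq (r k) := by
    intro k
    unfold Fmat
    field_simp
  have hNq : Tendsto (fun k => (l*(v 2)*(r k 1) - (v 1)*(γ (φ k) / β (φ k))*(r k 2))^2
      / ((r k 1)^2 + (γ (φ k) / β (φ k))^2 * (r k 2)^2)) atTop (𝓝 0) := by
    have h5 : Tendsto (fun k =>
        ((l*(v 2)*(r k 1) - (v 1)*(γ (φ k) / β (φ k))*(r k 2))^2 / nsq (r k))
        / (((r k 1)^2 + (γ (φ k) / β (φ k))^2 * (r k 2)^2) / nsq (r k))) atTop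
        (𝓝 (0 / (Fmat v 1 1 + l^2 * Fmat v 2 2))) := by
      refine Tendsto.div ?_ ?_ hμ.ne'
      · exact (hN0.congr fun k => hq1 k)
      · exact (hM.congr fun k => hq2 k)
    rw [zero_div] at h5
    refine h5.congr fun k => ?_
    rw [div_div_div_cancel_right₀ (nsq_pos (hr k)).ne']
  -- the quantity built from the image sequence
  have hQcoord : ∀ k, l^2*(v 2)^2
        * Fmat (fun i => (![1, β (φ k), γ (φ k)] : V3) i * r k i) 1 1
      - 2*l*(v 1)*(v 2) * Fmat (fun i => (![1, β (φ k), γ (φ k)] : V3) i * r k i) 1 2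
      + (v 1)^2 * Fmat (fun i => (![1, β (φ k), γ (φ k)] : V3) i * r k i) 2 2
      = (β (φ k) * (l*(v 2)*(r k 1) - (v 1)*(γ (φ k) / β (φ k))*(r k 2)))^2
        / ((r k 0)^2 + (β (φ k))^2
          * ((r k 1)^2 + (γ (φ k) / β (φ k))^2 * (r k 2)^2)) := by
    intro k
    have hD : (0:ℝ) < nsq (fun i => (![1, β (φ k), γ (φ k)] : V3) i * r k i) :=
      nsq_pos (scaled_ne (hβpos (φ k)).ne' (hγpos (φ k)).ne' (hr k))
    have hden : (r k 0)^2 + (β (φ k))^2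
          * ((r k 1)^2 + (γ (φ k) / β (φ k))^2 * (r k 2)^2)
        = nsq (fun i => (![1, β (φ k), γ (φ k)] : V3) i * r k i) := by
      unfold nsq
      simp only [Matrix.cons_val_zero, Matrix.cons_val_one, Matrix.head_cons,
        Matrix.cons_val_two, Matrix.tail_cons]
      field_simp [(hβpos (φ k)).ne']
      ring
    rw [hden]
    unfold Fmat nsq
    simp only [Matrix.cons_val_zero, Matrix.cons_val_one, Matrix.head_cons,
      Matrix.cons_val_two, Matrix.tail_cons]
    unfold nsq at hD
    simp only [Matrix.cons_val_zero, Matrix.cons_val_one, Matrix.head_cons,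
      Matrix.cons_val_two, Matrix.tail_cons] at hD
    field_simp [(hβpos (φ k)).ne', hD.ne']
    ring
  have hQ1 : Tendsto (fun k => l^2*(v 2)^2
        * Fmat (fun i => (![1, β (φ k), γ (φ k)] : V3) i * r k i) 1 1
      - 2*l*(v 1)*(v 2) * Fmat (fun i => (![1, β (φ k), γ (φ k)] : V3) i * r k i) 1 2
      + (v 1)^2 * Fmat (fun i => (![1, β (φ k), γ (φ k)] : V3) i * r k i) 2 2) atTop
      (𝓝 (l^2*(v 2)^2 * F y 1 1 - 2*l*(v 1)*(v 2) * F y 1 2 + (v 1)^2 * F y 2 2)) :=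
    (((hGij 1 1).const_mul _).sub ((hGij 1 2).const_mul _)).add ((hGij 2 2).const_mul _)
  have hQ0 : Tendsto (fun k => l^2*(v 2)^2
        * Fmat (fun i => (![1, β (φ k), γ (φ k)] : V3) i * r k i) 1 1
      - 2*l*(v 1)*(v 2) * Fmat (fun i => (![1, β (φ k), γ (φ k)] : V3) i * r k i) 1 2
      + (v 1)^2 * Fmat (fun i => (![1, β (φ k), γ (φ k)] : V3) i * r k i) 2 2) atTop
      (𝓝 0) := by
    refine squeeze_zero (fun k => ?_) (fun k => ?_) hNq
    · rw [hQcoord k]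
      positivity
    · rw [hQcoord k]
      refine sq_div_bound (hβpos (φ k)) (by positivity) (fun hd => ?_)
      have hR2 : (0:ℝ) < (γ (φ k) / β (φ k))^2 := by
        have := hγpos (φ k); have := hβpos (φ k); positivity
      have h1 : r k 1 = 0 := by nlinarith [sq_nonneg (r k 1), sq_nonneg (r k 2)]
      rw [h1] at hd
      simp only [ne_eq, OfNat.ofNat_ne_zero, not_false_eq_true, zero_pow, zero_add] at hd
      have h2 : r k 2 = 0 := by
        rcases mul_eq_zero.1 hd with h | h
        · exact absurd h hR2.ne'
        · exact pow_eq_zero_iff two_ne_zero |>.1 h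
      rw [h1, h2]; ring
  have hrel := tendsto_nhds_unique hQ1 hQ0
  exact on_line_of_rel l hl0 v hv hv0 y hrel

end RP2aux

end

set_option maxHeartbeats 1000000 in
/-- Lemma 2.7 (unbalanced type α dynamics on the projective plane, diagonal case). -/
theorem unbalanced_alpha_rp2_dynamics
    (β γ : ℕ → ℝ) (hpos : ∀ n, 0 < γ n ∧ γ n ≤ β n ∧ β n ≤ 1)
    (hβ : Filter.Tendsto β Filter.atTop (nhds 0)) (l : ℝ) (hl0 : 0 < l) (hl1 : l ≤ 1)
    (hratio : Filter.Tendsto (fun n => γ n / β n) Filter.atTop (nhds l))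
    (A : ℕ → GL3)
    (hA : ∀ n, (A n : Matrix (Fin 3) (Fin 3) ℝ) = Matrix.diagonal ![1, β n, γ n]) :
    (∀ (v : V3) (hv : v ≠ 0), v 0 ≠ 0 →
      DynSet (fun n => RP2.mapMat (A n)) (RP2.mk v hv) = {RP2.mk ![1, 0, 0] e1_ne}) ∧
    (∀ (v : V3) (hv : v ≠ 0), v 0 = 0 →
      DynSet (fun n => RP2.mapMat (A n)) (RP2.mk v hv) =
        {q : RP2 | ∃ (s t : ℝ) (h : (![s, t * v 1, t * (l * v 2)] : V3) ≠ 0),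
          q = RP2.mk ![s, t * v 1, t * (l * v 2)] h}) := by
  have hβpos : ∀ n, 0 < β n := fun n => lt_of_lt_of_le (hpos n).1 (hpos n).2.1
  have hγpos : ∀ n, 0 < γ n := fun n => (hpos n).1
  have hγ0 : Tendsto γ atTop (𝓝 0) :=
    squeeze_zero (fun n => (hγpos n).le) (fun n => (hpos n).2.1) hβ
  have hsqrt : Tendsto (fun n => Real.sqrt (β n)) atTop (𝓝 0) := by
    simpa [Function.comp_def] using (Real.continuous_sqrt.tendsto 0).comp hβ
  constructor
  · intro v hv hv0
    ext q
    simp only [Set.mem_singleton_iff]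
    constructor
    · intro hq
      exact RP2aux.part1_sub β γ hpos hβ A hA v hv hv0 q hq
    · rintro rfl
      refine ⟨id, strictMono_id, fun _ => RP2.mk v hv, tendsto_const_nhds, ?_⟩
      have hW : ∀ n, (fun i => (![1, β n, γ n] : V3) i * v i) ≠ 0 := fun n =>
        ne_zero_of_coord 0 (by simpa using hv0)
      have heq : ∀ n, RP2.mapMat (A n) (RP2.mk v hv)
          = RP2.mk (fun i => (![1, β n, γ n] : V3) i * v i) (hW n) := by
        intro n
        rw [RP2.mapMat_mk]
        exact RP2.mk_eq_mk_iff.2 ⟨1, one_ne_zero, by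
          rw [one_smul]; funext i; rw [hA, Matrix.mulVec_diagonal]⟩
      have hZ : (fun i => (![1, (0:ℝ), 0] : V3) i * v i) ≠ 0 :=
        ne_zero_of_coord 0 (by simpa using hv0)
      have hlim : Tendsto (fun n => (fun i => (![1, β n, γ n] : V3) i * v i)) atTop
          (𝓝 (fun i => (![1, (0:ℝ), 0] : V3) i * v i)) := by
        rw [tendsto_pi_nhds]
        intro i
        fin_cases i
        · simpa using (tendsto_const_nhds : Tendsto (fun _ : ℕ => v 0) atTop _)
        · simpa using hβ.mul_const (v 1)
        · simpa using hγ0.mul_const (v 2)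
      have hfin : RP2.mk _ hZ = RP2.mk ![1,0,0] e1_ne :=
        RP2.mk_eq_mk_iff.2 ⟨(v 0)⁻¹, inv_ne_zero hv0, by
          funext i; fin_cases i <;> simp [inv_mul_cancel₀ hv0]⟩
      rw [← hfin]
      exact (RP2aux.tendsto_mk hW hZ hlim).congr fun n => (heq n).symm
  · intro v hv hv0
    ext q
    simp only [Set.mem_setOf_eq]
    constructor
    · intro hq
      exact RP2aux.part2_sub β γ hpos hβ l hl0 hratio A hA v hv hv0 q hq
    · rintro ⟨s, t, hne, rfl⟩
      obtain ⟨i0, hi0⟩ := RP2aux.exists_ne hv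
      have hi0' : i0 ≠ 0 := by
        intro h; rw [h] at hi0; exact hi0 hv0
      have he1i0 : (![1,0,0] : V3) i0 = 0 := by
        fin_cases i0
        · exact absurd rfl hi0'
        · rfl
        · rfl
      by_cases ht : t = 0
      · subst ht
        have hs : s ≠ 0 := by
          intro h
          apply hne
          funext i; fin_cases i <;> simp [h]
        have hsq : ∀ n, Real.sqrt (β n) ≠ 0 := fun n => (Real.sqrt_pos.2 (hβpos n)).ne'
        have hun : ∀ n, (v + Real.sqrt (β n) • (![1,0,0] : V3)) ≠ 0 := fun n =>
          ne_zero_of_coord 0 (by simp [hv0, hsq n])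
        refine ⟨id, strictMono_id, fun n => RP2.mk _ (hun n), ?_, ?_⟩
        · apply RP2aux.tendsto_mk
          have h2 := Tendsto.add
            (tendsto_const_nhds : Tendsto (fun _ : ℕ => v) atTop (𝓝 v))
            (hsqrt.smul_const (![1,0,0] : V3))
          simpa using h2
        · have hz : ∀ n, (![1, Real.sqrt (β n) * v 1, γ n / Real.sqrt (β n) * v 2] : V3) ≠ 0 :=
            fun n => ne_zero_of_coord 0 (by norm_num)
          have hAz : ∀ n, (A n : Matrix (Fin 3) (Fin 3) ℝ) *ᵥ (v + Real.sqrt (β n) • ![1,0,0])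
              = Real.sqrt (β n) • ![1, Real.sqrt (β n) * v 1, γ n / Real.sqrt (β n) * v 2] := by
            intro n
            funext i
            rw [hA, Matrix.mulVec_diagonal]
            have hb := (hβpos n).ne'
            have hsb := hsq n
            fin_cases i
            · show 1 * (v 0 + Real.sqrt (β n) * 1) = Real.sqrt (β n) * 1
              rw [hv0]; ring
            · show β n * (v 1 + Real.sqrt (β n) * 0) = Real.sqrt (β n) * (Real.sqrt (β n) * v 1)
              rw [mul_zero, add_zero, ← mul_assoc, Real.mul_self_sqrt (hβpos n).le]
            · show γ n * (v 2 + Real.sqrt (β n) * 0) = Real.sqrt (β n) * (γ n / Real.sqrt (β n) * v 2)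
              field_simp
              ring
          have heq : ∀ n, RP2.mapMat (A n) (RP2.mk _ (hun n))
              = RP2.mk ![1, Real.sqrt (β n) * v 1, γ n / Real.sqrt (β n) * v 2] (hz n) := by
            intro n
            rw [RP2.mapMat_mk]
            exact (RP2.mk_eq_mk_iff.2 ⟨Real.sqrt (β n), hsq n, hAz n⟩).symm
          have hg2 : Tendsto (fun n => γ n / Real.sqrt (β n)) atTop (𝓝 0) := by
            refine squeeze_zero
              (fun n => div_nonneg (hγpos n).le (Real.sqrt_nonneg _)) (fun n => ?_) hsqrt
            calc γ n / Real.sqrt (β n) ≤ β n / Real.sqrt (β n) := by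
                  have h1 : (0:ℝ) < Real.sqrt (β n) := Real.sqrt_pos.2 (hβpos n)
                  gcongr
                  exact (hpos n).2.1
              _ = Real.sqrt (β n) := Real.div_sqrt
          have hzlim : Tendsto
              (fun n => (![1, Real.sqrt (β n) * v 1, γ n / Real.sqrt (β n) * v 2] : V3))
              atTop (𝓝 ![1, 0, 0]) := by
            rw [tendsto_pi_nhds]; intro i
            fin_cases i
            · simpa using (tendsto_const_nhds : Tendsto (fun _ : ℕ => (1:ℝ)) atTop _)
            · simpa using hsqrt.mul_const (v 1)
            · simpa using hg2.mul_const (v 2)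
          have hfin : RP2.mk (![1,0,0] : V3) e1_ne = RP2.mk ![s, 0 * v 1, 0 * (l * v 2)] hne :=
            RP2.mk_eq_mk_iff.2 ⟨s, hs, by funext i; fin_cases i <;> simp⟩
          rw [← hfin]
          exact (RP2aux.tendsto_mk hz e1_ne hzlim).congr fun n => (heq n).symm
      · -- t ≠ 0
        have hun : ∀ n, (v + ((s/t) * β n) • (![1,0,0] : V3)) ≠ 0 := fun n =>
          ne_zero_of_coord i0 (by
            simp only [Pi.add_apply, Pi.smul_apply, smul_eq_mul, he1i0, mul_zero, add_zero]
            exact hi0)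
        have hz : ∀ n, (![s/t, v 1, γ n / β n * v 2] : V3) ≠ 0 := by
          intro n
          apply ne_zero_of_coord i0
          fin_cases i0
          · exact absurd rfl hi0'
          · simpa using hi0
          · simp only [Matrix.cons_val_two, Matrix.tail_cons, Matrix.head_cons]
            exact mul_ne_zero (div_ne_zero (hγpos n).ne' (hβpos n).ne') hi0
        have hzi : (![s/t, v 1, l * v 2] : V3) ≠ 0 := by
          apply ne_zero_of_coord i0
          fin_cases i0
          · exact absurd rfl hi0'
          · simpa using hi0
          · simp only [Matrix.cons_val_two, Matrix.tail_cons, Matrix.head_cons]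
            exact mul_ne_zero hl0.ne' hi0
        refine ⟨id, strictMono_id, fun n => RP2.mk _ (hun n), ?_, ?_⟩
        · apply RP2aux.tendsto_mk
          have h2 := Tendsto.add
            (tendsto_const_nhds : Tendsto (fun _ : ℕ => v) atTop (𝓝 v))
            ((hβ.const_mul (s/t)).smul_const (![1,0,0] : V3))
          simpa using h2
        · have hAz : ∀ n, (A n : Matrix (Fin 3) (Fin 3) ℝ) *ᵥ (v + ((s/t) * β n) • ![1,0,0])
              = β n • ![s/t, v 1, γ n / β n * v 2] := by
            intro n
            funext i
            rw [hA, Matrix.mulVec_diagonal]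
            have hb := (hβpos n).ne'
            fin_cases i
            · show 1 * (v 0 + s/t * β n * 1) = β n * (s/t)
              rw [hv0]; ring
            · show β n * (v 1 + s/t * β n * 0) = β n * v 1
              ring
            · show γ n * (v 2 + s/t * β n * 0) = β n * (γ n / β n * v 2)
              field_simp
              ring
          have heq : ∀ n, RP2.mapMat (A n) (RP2.mk _ (hun n))
              = RP2.mk ![s/t, v 1, γ n / β n * v 2] (hz n) := by
            intro n
            rw [RP2.mapMat_mk]
            exact (RP2.mk_eq_mk_iff.2 ⟨β n, (hβpos n).ne', hAz n⟩).symm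
          have hzlim : Tendsto (fun n => (![s/t, v 1, γ n / β n * v 2] : V3))
              atTop (𝓝 ![s/t, v 1, l * v 2]) := by
            rw [tendsto_pi_nhds]; intro i
            fin_cases i
            · simpa using (tendsto_const_nhds : Tendsto (fun _ : ℕ => s/t) atTop _)
            · simpa using (tendsto_const_nhds : Tendsto (fun _ : ℕ => v 1) atTop _)
            · simpa using hratio.mul_const (v 2)
          have hfin : RP2.mk (![s/t, v 1, l * v 2] : V3) hzi
              = RP2.mk ![s, t * v 1, t * (l * v 2)] hne :=
            RP2.mk_eq_mk_iff.2 ⟨t, ht, by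
              funext i
              fin_cases i
              · show s = t * (s/t)
                field_simp
              · rfl
              · rfl⟩
          rw [← hfin]
          exact (RP2aux.tendsto_mk hz hzi hzlim).congr fun n => (heq n).symm
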